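/- Let x, y : [0, ∞) → ℝ^n be differentiable functions satisfying, for each i, d/dt (x_i(t) y_i(t)) = -(x_i(t) y_i(t) - μ(t)) where 0 ≤ μ(t) ≤ σ x_i(t) y_i(t) for a constant 0 < σ < 1 and x_i(0) y_i(0) > 0. Then for all t ≥ 0 and all i, x_i(0) y_i(0) exp(-t) ≤ x_i(t) y_i(t) ≤ x_i(0) y_i(0) exp(-(1-σ) t). -/

import Mathlib

open Real

/-- If each product `xᵢ(t)yᵢ(t)` satisfies `d/dt (xᵢ yᵢ) = -(xᵢ yᵢ - μ(t))` with
`0 ≤ μ(t) ≤ σ xᵢ(t) yᵢ(t)`, `0 < σ < 1`, and `xᵢ(0)yᵢ(0) > 0`, then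
`xᵢ(0)yᵢ(0) e^{-t} ≤ xᵢ(t)yᵢ(t) ≤ xᵢ(0)yᵢ(0) e^{-(1-σ)t}` for all `t ≥ 0`. -/
theorem stmt_1 (n : ℕ) (x y : ℝ → Fin n → ℝ) (μ : ℝ → ℝ) (σ : ℝ)
    (hσ : 0 < σ) (hσ1 : σ < 1)
    (hderiv : ∀ i : Fin n, ∀ t ≥ (0:ℝ),
      HasDerivAt (fun s => x s i * y s i) (-(x t i * y t i - μ t)) t)
    (hμ0 : ∀ t ≥ (0:ℝ), 0 ≤ μ t)
    (hμ : ∀ i : Fin n, ∀ t ≥ (0:ℝ), μ t ≤ σ * (x t i * y t i))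
    (hpos : ∀ i : Fin n, 0 < x 0 i * y 0 i) :
    ∀ t ≥ (0:ℝ), ∀ i : Fin n,
      x 0 i * y 0 i * exp (-t) ≤ x t i * y t i ∧
      x t i * y t i ≤ x 0 i * y 0 i * exp (-(1 - σ) * t) := by
  intro t ht i
  set f : ℝ → ℝ := fun s => x s i * y s i with hf
  have hder : ∀ s ≥ (0:ℝ), HasDerivAt f (-(f s - μ s)) s := fun s hs => hderiv i s hs
  -- exp facts
  have hE1 : Real.exp (-t) * Real.exp t = 1 := by rw [← Real.exp_add]; simp
  have hE2 : Real.exp (-(1 - σ) * t) * Real.exp ((1 - σ) * t) = 1 := by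
    rw [← Real.exp_add]; ring_nf; simp
  constructor
  · -- lower bound: g s = f s * exp s is monotone on [0,∞)
    have hg : ∀ s ∈ Set.Ici (0:ℝ), HasDerivAt (fun u => f u * Real.exp u)
        (μ s * Real.exp s) s := by
      intro s hs
      have h := (hder s hs).mul (Real.hasDerivAt_exp s)
      exact h.congr_deriv (by ring)
    have hmono : MonotoneOn (fun u => f u * Real.exp u) (Set.Ici 0) := by
      apply monotoneOn_of_deriv_nonneg (convex_Ici 0)
      · exact fun s hs => (hg s hs).continuousAt.continuousWithinAt
      · intro s hs
        rw [interior_Ici] at hs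
        exact (hg s (Set.mem_Ioi.mp hs).le).differentiableAt.differentiableWithinAt
      · intro s hs
        rw [interior_Ici] at hs
        rw [(hg s (Set.mem_Ioi.mp hs).le).deriv]
        exact mul_nonneg (hμ0 s (Set.mem_Ioi.mp hs).le) (Real.exp_pos s).le
    have h0t := hmono (Set.self_mem_Ici) ht ht
    simp only [Real.exp_zero, mul_one] at h0t
    have h0t' : x 0 i * y 0 i ≤ x t i * y t i * Real.exp t := h0t
    calc x 0 i * y 0 i * Real.exp (-t)
        ≤ (x t i * y t i * Real.exp t) * Real.exp (-t) :=
          mul_le_mul_of_nonneg_right h0t' (Real.exp_pos _).le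
      _ = x t i * y t i := by rw [mul_assoc, ← Real.exp_add]; simp
  · -- upper bound: h s = f s * exp ((1-σ)s) is antitone on [0,∞)
    have hg : ∀ s ∈ Set.Ici (0:ℝ), HasDerivAt (fun u => f u * Real.exp ((1 - σ) * u))
        ((μ s - σ * f s) * Real.exp ((1 - σ) * s)) s := by
      intro s hs
      have he : HasDerivAt (fun u => Real.exp ((1 - σ) * u))
          (Real.exp ((1 - σ) * s) * (1 - σ)) s := by
        simpa using ((hasDerivAt_id s).const_mul (1 - σ)).exp
      have h := (hder s hs).mul he
      exact h.congr_deriv (by ring)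
    have hanti : AntitoneOn (fun u => f u * Real.exp ((1 - σ) * u)) (Set.Ici 0) := by
      apply antitoneOn_of_deriv_nonpos (convex_Ici 0)
      · exact fun s hs => (hg s hs).continuousAt.continuousWithinAt
      · intro s hs
        rw [interior_Ici] at hs
        exact (hg s (Set.mem_Ioi.mp hs).le).differentiableAt.differentiableWithinAt
      · intro s hs
        rw [interior_Ici] at hs
        rw [(hg s (Set.mem_Ioi.mp hs).le).deriv]
        have := hμ i s (Set.mem_Ioi.mp hs).le
        have : μ s - σ * f s ≤ 0 := by simpa [hf] using sub_nonpos.mpr this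
        exact mul_nonpos_of_nonpos_of_nonneg this (Real.exp_pos _).le
    have h0t := hanti (Set.self_mem_Ici) ht ht
    simp only [mul_zero, Real.exp_zero, mul_one] at h0t
    have h0t' : x t i * y t i * Real.exp ((1 - σ) * t) ≤ x 0 i * y 0 i := h0t
    calc x t i * y t i
        = (x t i * y t i * Real.exp ((1 - σ) * t)) * Real.exp (-(1 - σ) * t) := by
          rw [mul_assoc, ← Real.exp_add]; ring_nf; simp
      _ ≤ x 0 i * y 0 i * Real.exp (-(1 - σ) * t) :=
          mul_le_mul_of_nonneg_right h0t' (Real.exp_pos _).le
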